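/- The function Ψ, defined by Ψ(x) = (1/x)·ln((e^x − 1)/x) for x ≠ 0 and Ψ(0) = 1/2, is strictly increasing on ℝ. -/

import Mathlib

open Real Set Filter Topology

noncomputable def Psi (x : ℝ) : ℝ :=
  if x = 0 then 1 / 2 else (1 / x) * Real.log ((Real.exp x - 1) / x)

noncomputable def Phi (x : ℝ) : ℝ :=
  if x = 0 then 0 else Real.log ((Real.exp x - 1) / x)

noncomputable def gg (x : ℝ) : ℝ := Real.exp x / (Real.exp x - 1) - x⁻¹

lemma exp_sub_one_pos {x : ℝ} (hx : 0 < x) : 0 < Real.exp x - 1 := by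
  linarith [Real.add_one_le_exp x]

lemma exp_sub_one_ne {x : ℝ} (hx : x ≠ 0) : Real.exp x - 1 ≠ 0 := by
  intro h
  exact hx ((Real.exp_eq_one_iff x).1 (by linarith))

lemma key {x : ℝ} (hx : 0 < x) : x * Real.exp (x / 2) < Real.exp x - 1 := by
  have h : x / 2 < Real.sinh (x / 2) := Real.self_lt_sinh_iff.2 (by positivity)
  have hs : Real.sinh (x / 2) = (Real.exp (x / 2) - Real.exp (-(x / 2))) / 2 :=
    Real.sinh_eq _
  have he : Real.exp (x / 2) * Real.exp (x / 2) = Real.exp x := by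
    rw [← Real.exp_add]; ring_nf
  have he2 : Real.exp (x / 2) * Real.exp (-(x / 2)) = 1 := by
    rw [← Real.exp_add]; simp
  have h' : x < Real.exp (x / 2) - Real.exp (-(x / 2)) := by rw [hs] at h; linarith
  nlinarith [Real.exp_pos (x / 2), mul_lt_mul_of_pos_right h' (Real.exp_pos (x / 2))]

lemma Phi_eqOn : ∀ y ∈ Ioi (0 : ℝ), Phi y = Real.log (Real.exp y - 1) - Real.log y := by
  intro y hy
  rw [Phi, if_neg (ne_of_gt hy), Real.log_div (exp_sub_one_ne (ne_of_gt hy)) (ne_of_gt hy)]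

lemma hasDerivAt_Phi {x : ℝ} (hx : 0 < x) : HasDerivAt Phi (gg x) x := by
  have h1 : HasDerivAt (fun y => Real.log (Real.exp y - 1) - Real.log y)
      (Real.exp x / (Real.exp x - 1) - x⁻¹) x := by
    have ha : HasDerivAt (fun y => Real.exp y - 1) (Real.exp x) x :=
      (Real.hasDerivAt_exp x).sub_const 1
    exact (ha.log (exp_sub_one_ne (ne_of_gt hx))).sub (Real.hasDerivAt_log (ne_of_gt hx))
  have heq : Phi =ᶠ[𝓝 x] fun y => Real.log (Real.exp y - 1) - Real.log y :=
    Filter.eventuallyEq_of_mem (isOpen_Ioi.mem_nhds hx) Phi_eqOn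
  exact h1.congr_of_eventuallyEq heq

lemma hasDerivAt_gg {x : ℝ} (hx : 0 < x) :
    HasDerivAt gg ((x ^ 2)⁻¹ - Real.exp x / (Real.exp x - 1) ^ 2) x := by
  have ha : HasDerivAt (fun y => Real.exp y - 1) (Real.exp x) x :=
    (Real.hasDerivAt_exp x).sub_const 1
  have h1 : HasDerivAt (fun y => Real.exp y / (Real.exp y - 1))
      ((Real.exp x * (Real.exp x - 1) - Real.exp x * Real.exp x) / (Real.exp x - 1) ^ 2) x :=
    (Real.hasDerivAt_exp x).div ha (exp_sub_one_ne (ne_of_gt hx))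
  have h2 : HasDerivAt gg (((Real.exp x * (Real.exp x - 1) - Real.exp x * Real.exp x) /
      (Real.exp x - 1) ^ 2) - -(x ^ 2)⁻¹) x := h1.sub (hasDerivAt_inv (ne_of_gt hx))
  convert h2 using 1
  have hE := exp_sub_one_ne (ne_of_gt hx)
  field_simp
  ring

lemma gg_deriv_pos {x : ℝ} (hx : 0 < x) :
    0 < (x ^ 2)⁻¹ - Real.exp x / (Real.exp x - 1) ^ 2 := by
  have hE := exp_sub_one_pos hx
  have hk := key hx
  have hsq : x ^ 2 * Real.exp x < (Real.exp x - 1) ^ 2 := by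
    have h2 : (x * Real.exp (x / 2)) ^ 2 < (Real.exp x - 1) ^ 2 := by
      apply sq_lt_sq' _ hk
      nlinarith [Real.exp_pos (x / 2)]
    have he : Real.exp (x / 2) * Real.exp (x / 2) = Real.exp x := by
      rw [← Real.exp_add]; ring_nf
    nlinarith
  rw [sub_pos, div_lt_iff₀ (by positivity), inv_mul_eq_div, lt_div_iff₀ (by positivity)]
  nlinarith

lemma gg_mono : StrictMonoOn gg (Ioi 0) := by
  apply strictMonoOn_of_deriv_pos (convex_Ioi 0)
  · intro x hx
    exact ((hasDerivAt_gg hx).continuousAt).continuousWithinAt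
  · intro x hx
    rw [interior_Ioi] at hx
    rw [(hasDerivAt_gg hx).deriv]
    exact gg_deriv_pos hx

lemma Phi_contAt_zero : ContinuousAt Phi 0 := by
  have hslope : Tendsto (fun y => (Real.exp y - 1) / y) (𝓝[≠] (0 : ℝ)) (𝓝 1) := by
    have h := hasDerivAt_iff_tendsto_slope.1 (Real.hasDerivAt_exp 0)
    rw [Real.exp_zero] at h
    refine h.congr fun y => ?_
    simp [slope_def_field, Real.exp_zero]
  have hlog : Tendsto (fun y => Real.log ((Real.exp y - 1) / y)) (𝓝[≠] (0 : ℝ)) (𝓝 0) := by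
    have := (Real.continuousAt_log one_ne_zero).tendsto.comp hslope
    simpa [Function.comp_def] using this
  have hPhi : Tendsto Phi (𝓝[≠] (0 : ℝ)) (𝓝 0) := by
    refine hlog.congr' ?_
    filter_upwards [self_mem_nhdsWithin] with y hy
    have hy' : y ≠ 0 := hy
    rw [Phi, if_neg hy']
  have h0 : Phi 0 = 0 := by simp [Phi]
  have hsup : Tendsto Phi (𝓝[≠] (0 : ℝ) ⊔ pure 0) (𝓝 0) :=
    tendsto_sup.2 ⟨hPhi, by simpa [h0] using tendsto_pure_nhds Phi (0 : ℝ)⟩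
  rw [nhdsNE_sup_pure] at hsup
  rw [ContinuousAt, h0]
  exact hsup

lemma Phi_convex : StrictConvexOn ℝ (Ici 0) Phi := by
  apply StrictMonoOn.strictConvexOn_of_deriv (convex_Ici 0)
  · intro x hx
    rcases eq_or_lt_of_le (mem_Ici.1 hx) with h | h
    · exact (h ▸ Phi_contAt_zero).continuousWithinAt
    · exact ((hasDerivAt_Phi h).continuousAt).continuousWithinAt
  · rw [interior_Ici]
    intro a ha b hb hab
    rw [(hasDerivAt_Phi ha).deriv, (hasDerivAt_Phi hb).deriv]
    exact gg_mono ha hb hab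

lemma Psi_eq_Phi {x : ℝ} (hx : x ≠ 0) : Psi x = (1 / x) * Phi x := by
  rw [Psi, Phi, if_neg hx, if_neg hx]

lemma Psi_pos_lt {x y : ℝ} (hx : 0 < x) (hxy : x < y) : Psi x < Psi y := by
  have hy : 0 < y := lt_trans hx hxy
  have hxy' : x / y < 1 := (div_lt_one hy).2 hxy
  have h := Phi_convex.2 (self_mem_Ici) (mem_Ici.2 (le_of_lt hy)) (ne_of_lt hy)
    (show (0:ℝ) < 1 - x / y by linarith) (show (0:ℝ) < x / y by positivity) (by ring)
  have h0 : Phi 0 = 0 := by simp [Phi]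
  have hpt : (1 - x / y) • (0 : ℝ) + (x / y) • y = x := by
    rw [smul_eq_mul, smul_eq_mul, mul_zero, zero_add, div_mul_cancel₀ x (ne_of_gt hy)]
  rw [hpt, h0] at h
  have h' : Phi x < (x / y) * Phi y := by
    simpa using h
  rw [Psi_eq_Phi (ne_of_gt hx), Psi_eq_Phi (ne_of_gt hy)]
  have := mul_lt_mul_of_pos_left h' (show (0:ℝ) < 1 / x by positivity)
  calc (1 / x) * Phi x < (1 / x) * ((x / y) * Phi y) := this
    _ = (1 / y) * Phi y := by field_simp

lemma Psi_gt_half {x : ℝ} (hx : 0 < x) : 1 / 2 < Psi x := by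
  have hE := exp_sub_one_pos hx
  have h1 : Real.exp (x / 2) < (Real.exp x - 1) / x := by
    rw [lt_div_iff₀ hx]
    linarith [key hx]
  have h2 : x / 2 < Real.log ((Real.exp x - 1) / x) := by
    have := Real.log_lt_log (Real.exp_pos _) h1
    rwa [Real.log_exp] at this
  rw [Psi, if_neg (ne_of_gt hx)]
  have := mul_lt_mul_of_pos_left h2 (show (0:ℝ) < 1 / x by positivity)
  calc (1:ℝ) / 2 = (1 / x) * (x / 2) := by field_simp
    _ < (1 / x) * Real.log ((Real.exp x - 1) / x) := this

lemma Psi_add {x : ℝ} (hx : x ≠ 0) : Psi x + Psi (-x) = 1 := by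
  have hE := exp_sub_one_ne hx
  have hprod : (Real.exp (-x) - 1) / (-x) = Real.exp (-x) * ((Real.exp x - 1) / x) := by
    rw [Real.exp_neg]
    field_simp
    ring
  have hne : (Real.exp x - 1) / x ≠ 0 := div_ne_zero hE hx
  rw [Psi, Psi, if_neg hx, if_neg (neg_ne_zero.2 hx), hprod,
    Real.log_mul (Real.exp_ne_zero _) hne, Real.log_exp]
  set L := Real.log ((Real.exp x - 1) / x) with hL
  calc 1 / x * L + 1 / (-x) * (-x + L) = 1 / x * x := by ring
    _ = 1 := one_div_mul_cancel hx

theorem Psi_strictMono : StrictMono Psi := by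
  intro x y hxy
  rcases lt_trichotomy x 0 with hx | hx | hx
  · have hx' : (-x) ≠ 0 := by simp [ne_of_lt hx]
    have hxadd := Psi_add (ne_of_lt hx)
    rcases lt_trichotomy y 0 with hy | hy | hy
    · have hyadd := Psi_add (ne_of_lt hy)
      have : Psi (-y) < Psi (-x) := Psi_pos_lt (by linarith) (by linarith)
      linarith
    · have h := Psi_gt_half (show 0 < -x by linarith)
      have : Psi y = 1 / 2 := by rw [hy, Psi, if_pos rfl]
      linarith
    · have h1 := Psi_gt_half (show 0 < -x by linarith)
      have h2 := Psi_gt_half hy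
      linarith
  · have : Psi x = 1 / 2 := by rw [hx, Psi, if_pos rfl]
    have h2 := Psi_gt_half (hx ▸ hxy)
    linarith
  · exact Psi_pos_lt hx hxy
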